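/- Contraction lemma for Rademacher complexity: if φ_1, …, φ_m : ℝ → ℝ are each ρ-Lipschitz, and for a ∈ ℝ^m we write φ(a) = (φ_1(a_1), …, φ_m(a_m)), then R(φ ∘ A) ≤ ρ·R(A) for any bounded set A ⊆ ℝ^m. -/
import Mathlib

open Finset Pointwise

private lemma key_step {α : Type*} (A : Set α) (hne : A.Nonempty) (F F' G : α → ℝ)
    (h3 : BddAbove ((fun a => F' a + G a) '' A))
    (h4 : BddAbove ((fun a => -F' a + G a) '' A))
    (hcmp : ∀ a ∈ A, ∀ b ∈ A, F a - F b ≤ max (F' a - F' b) (F' b - F' a)) :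
    sSup ((fun a => F a + G a) '' A) + sSup ((fun a => -F a + G a) '' A) ≤
      sSup ((fun a => F' a + G a) '' A) + sSup ((fun a => -F' a + G a) '' A) := by
  have hpt : ∀ a ∈ A, ∀ b ∈ A, (F a + G a) + (-F b + G b) ≤
      sSup ((fun a => F' a + G a) '' A) + sSup ((fun a => -F' a + G a) '' A) := by
    intro a ha b hb
    have h := hcmp a ha b hb
    rcases max_cases (F' a - F' b) (F' b - F' a) with ⟨he, _⟩ | ⟨he, _⟩
    · have l1 : F' a + G a ≤ sSup ((fun a => F' a + G a) '' A) :=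
        le_csSup h3 ⟨a, ha, rfl⟩
      have l2 : -F' b + G b ≤ sSup ((fun a => -F' a + G a) '' A) :=
        le_csSup h4 ⟨b, hb, rfl⟩
      rw [he] at h; linarith
    · have l1 : F' b + G b ≤ sSup ((fun a => F' a + G a) '' A) :=
        le_csSup h3 ⟨b, hb, rfl⟩
      have l2 : -F' a + G a ≤ sSup ((fun a => -F' a + G a) '' A) :=
        le_csSup h4 ⟨a, ha, rfl⟩
      rw [he] at h; linarith
  rw [← le_sub_iff_add_le]
  refine csSup_le (hne.image _) ?_
  rintro x ⟨a, ha, rfl⟩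
  dsimp only
  rw [le_sub_comm]
  refine csSup_le (hne.image _) ?_
  rintro y ⟨b, hb, rfl⟩
  dsimp only
  have := hpt a ha b hb
  linarith

private lemma bdd_image {m : ℕ} (A : Set (Fin m → ℝ)) (hA : Bornology.IsBounded A)
    (ρ : ℝ) (hρ : 0 ≤ ρ) (c : Fin m → ℝ) (hc : ∀ i, |c i| = 1)
    (ψ : Fin m → ℝ → ℝ) (hψ : ∀ i x y, |ψ i x - ψ i y| ≤ ρ * |x - y|) :
    BddAbove ((fun a => ∑ i, c i * ψ i (a i)) '' A) := by
  rcases A.eq_empty_or_nonempty with h | ⟨a₀, ha₀⟩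
  · simp [h]
  obtain ⟨C, hC⟩ := Metric.isBounded_iff.mp hA
  refine ⟨(∑ i, c i * ψ i (a₀ i)) + m * (ρ * C), ?_⟩
  rintro x ⟨a, ha, rfl⟩
  have hterm : ∀ i : Fin m, c i * ψ i (a i) ≤ c i * ψ i (a₀ i) + ρ * C := by
    intro i
    have h1 : |c i * ψ i (a i) - c i * ψ i (a₀ i)| ≤ ρ * C := by
      have he : c i * ψ i (a i) - c i * ψ i (a₀ i) = c i * (ψ i (a i) - ψ i (a₀ i)) := by
        ring
      rw [he, abs_mul, hc i, one_mul]
      calc |ψ i (a i) - ψ i (a₀ i)| ≤ ρ * |a i - a₀ i| := hψ i _ _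
        _ ≤ ρ * C := by
            refine mul_le_mul_of_nonneg_left ?_ hρ
            have hd := dist_le_pi_dist a a₀ i
            rw [Real.dist_eq] at hd
            exact hd.trans (hC ha ha₀)
    have := le_abs_self (c i * ψ i (a i) - c i * ψ i (a₀ i))
    linarith
  calc ∑ i, c i * ψ i (a i) ≤ ∑ i : Fin m, (c i * ψ i (a₀ i) + ρ * C) :=
        Finset.sum_le_sum fun i _ => hterm i
    _ = (∑ i, c i * ψ i (a₀ i)) + m * (ρ * C) := by
        rw [Finset.sum_add_distrib, Finset.sum_const, card_univ, Fintype.card_fin,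
          nsmul_eq_mul]

private lemma hybrid_step {m : ℕ} (A : Set (Fin m → ℝ)) (hA : Bornology.IsBounded A)
    (hne : A.Nonempty) (ρ : ℝ) (hρ : 0 ≤ ρ) (ψ χ : Fin m → ℝ → ℝ)
    (hχ : ∀ i x y, |χ i x - χ i y| ≤ ρ * |x - y|)
    (κ : Fin m) (hagree : ∀ i, i ≠ κ → ψ i = χ i)
    (hdom : ∀ x y, |ψ κ x - ψ κ y| ≤ |χ κ x - χ κ y|) :
    ∑ σ : Fin m → Bool,
        sSup ((fun a => ∑ i, (if σ i then (1:ℝ) else -1) * ψ i (a i)) '' A) ≤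
      ∑ σ : Fin m → Bool,
        sSup ((fun a => ∑ i, (if σ i then (1:ℝ) else -1) * χ i (a i)) '' A) := by
  set ε : (Fin m → Bool) → Fin m → ℝ := fun σ i => if σ i then (1:ℝ) else -1 with hε
  have habs : ∀ σ i, |ε σ i| = 1 := by
    intro σ i; simp only [hε]; split <;> norm_num
  set fψ : (Fin m → Bool) → ℝ :=
    fun σ => sSup ((fun a => ∑ i, ε σ i * ψ i (a i)) '' A) with hfψ
  set fχ : (Fin m → Bool) → ℝ :=
    fun σ => sSup ((fun a => ∑ i, ε σ i * χ i (a i)) '' A) with hfχ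
  show ∑ σ, fψ σ ≤ ∑ σ, fχ σ
  set flip : (Fin m → Bool) → (Fin m → Bool) :=
    fun σ => Function.update σ κ (!σ κ) with hflip
  have hinv : Function.Involutive flip := by
    intro σ
    funext i
    by_cases h : i = κ
    · subst h; simp [hflip]
    · simp [hflip, Function.update_of_ne h]
  have hbij := hinv.bijective
  have hflipsum_ψ : ∑ σ, fψ (flip σ) = ∑ σ, fψ σ := hbij.sum_comp fψ
  have hflipsum_χ : ∑ σ, fχ (flip σ) = ∑ σ, fχ σ := hbij.sum_comp fχ
  -- the pairwise inequality
  have hpair : ∀ σ, fψ σ + fψ (flip σ) ≤ fχ σ + fχ (flip σ) := by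
    intro σ
    set G : (Fin m → ℝ) → ℝ := fun a => ∑ i ∈ univ.erase κ, ε σ i * χ i (a i) with hG
    set F : (Fin m → ℝ) → ℝ := fun a => ε σ κ * ψ κ (a κ) with hF
    set F' : (Fin m → ℝ) → ℝ := fun a => ε σ κ * χ κ (a κ) with hF'
    have hεflip_same : ∀ i, i ≠ κ → ε (flip σ) i = ε σ i := by
      intro i hi
      simp only [hε, hflip, Function.update_of_ne hi]
    have hεflipκ : ε (flip σ) κ = -(ε σ κ) := by
      simp only [hε, hflip, Function.update_self]
      cases σ κ <;> norm_num
    have edec : ∀ (τ : Fin m → Bool) (ξ : Fin m → ℝ → ℝ), (∀ i, i ≠ κ → ξ i = χ i) →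
        (∀ i, i ≠ κ → ε τ i = ε σ i) →
        (fun a : Fin m → ℝ => ∑ i, ε τ i * ξ i (a i)) =
          fun a => ε τ κ * ξ κ (a κ) + G a := by
      intro τ ξ hξ hτ
      funext a
      rw [hG]
      rw [← Finset.add_sum_erase _ _ (mem_univ κ)]
      congr 1
      refine Finset.sum_congr rfl ?_
      intro i hi
      rw [Finset.mem_erase] at hi
      rw [hξ i hi.1, hτ i hi.1]
    have e1 : (fun a : Fin m → ℝ => ∑ i, ε σ i * ψ i (a i)) = fun a => F a + G a :=
      edec σ ψ hagree (fun _ _ => rfl)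
    have e2 : (fun a : Fin m → ℝ => ∑ i, ε (flip σ) i * ψ i (a i)) =
        fun a => -F a + G a := by
      rw [edec (flip σ) ψ hagree hεflip_same]
      funext a
      rw [hεflipκ, hF]; ring
    have e3 : (fun a : Fin m → ℝ => ∑ i, ε σ i * χ i (a i)) = fun a => F' a + G a :=
      edec σ χ (fun _ _ => rfl) (fun _ _ => rfl)
    have e4 : (fun a : Fin m → ℝ => ∑ i, ε (flip σ) i * χ i (a i)) =
        fun a => -F' a + G a := by
      rw [edec (flip σ) χ (fun _ _ => rfl) hεflip_same]
      funext a
      rw [hεflipκ, hF']; ring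
    have h3 : BddAbove ((fun a => F' a + G a) '' A) := by
      rw [← e3]; exact bdd_image A hA ρ hρ (ε σ) (habs σ) χ hχ
    have h4 : BddAbove ((fun a => -F' a + G a) '' A) := by
      rw [← e4]; exact bdd_image A hA ρ hρ (ε (flip σ)) (habs _) χ hχ
    have hcmp : ∀ a ∈ A, ∀ b ∈ A, F a - F b ≤ max (F' a - F' b) (F' b - F' a) := by
      intro a _ b _
      have h5 : |F a - F b| ≤ |F' a - F' b| := by
        have hFa : F a - F b = ε σ κ * (ψ κ (a κ) - ψ κ (b κ)) := by rw [hF]; ring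
        have hFa' : F' a - F' b = ε σ κ * (χ κ (a κ) - χ κ (b κ)) := by rw [hF']; ring
        rw [hFa, hFa', abs_mul, abs_mul, habs σ κ, one_mul, one_mul]
        exact hdom _ _
      calc F a - F b ≤ |F a - F b| := le_abs_self _
        _ ≤ |F' a - F' b| := h5
        _ = max (F' a - F' b) (-(F' a - F' b)) := abs_eq_max_neg
        _ = max (F' a - F' b) (F' b - F' a) := by rw [neg_sub]
    have := key_step A hne F F' G h3 h4 hcmp
    show sSup _ + sSup _ ≤ sSup _ + sSup _
    rw [e1, e2, e3, e4]
    exact this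
  have : ∑ σ, fψ σ + ∑ σ, fψ σ ≤ ∑ σ, fχ σ + ∑ σ, fχ σ := by
    calc ∑ σ, fψ σ + ∑ σ, fψ σ = ∑ σ, fψ σ + ∑ σ, fψ (flip σ) := by rw [hflipsum_ψ]
      _ = ∑ σ, (fψ σ + fψ (flip σ)) := (Finset.sum_add_distrib).symm
      _ ≤ ∑ σ, (fχ σ + fχ (flip σ)) := Finset.sum_le_sum fun σ _ => hpair σ
      _ = ∑ σ, fχ σ + ∑ σ, fχ (flip σ) := Finset.sum_add_distrib
      _ = ∑ σ, fχ σ + ∑ σ, fχ σ := by rw [hflipsum_χ]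
  linarith

/-- Rademacher complexity of a set of vectors in ℝ^m. -/
noncomputable def radComplexity (m : ℕ) (A : Set (Fin m → ℝ)) : ℝ :=
  ((m : ℝ))⁻¹ * ((2 : ℝ) ^ m)⁻¹ * ∑ σ : Fin m → Bool,
    sSup ((fun a : Fin m → ℝ => ∑ i, (if σ i then (1 : ℝ) else -1) * a i) '' A)

/-- Contraction lemma: composing coordinatewise with ρ-Lipschitz maps multiplies
the Rademacher complexity by at most ρ. -/
theorem radComplexity_contraction (m : ℕ) (A : Set (Fin m → ℝ))
    (hA : Bornology.IsBounded A) (hne : A.Nonempty) (ρ : ℝ) (hρ : 0 ≤ ρ)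
    (φ : Fin m → ℝ → ℝ) (hφ : ∀ i a b, |φ i a - φ i b| ≤ ρ * |a - b|) :
    radComplexity m ((fun a i => φ i (a i)) '' A) ≤ ρ * radComplexity m A := by
  set Ψ : ℕ → Fin m → ℝ → ℝ := fun k i x => if (i : ℕ) < k then ρ * x else φ i x with hΨ
  have hΨlip : ∀ k i x y, |Ψ k i x - Ψ k i y| ≤ ρ * |x - y| := by
    intro k i x y
    simp only [hΨ]
    split
    · rw [← mul_sub, abs_mul, abs_of_nonneg hρ]
    · exact hφ i x y
  set T : ℕ → ℝ := fun k => ∑ σ : Fin m → Bool,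
      sSup ((fun a : Fin m → ℝ =>
        ∑ i, (if σ i then (1:ℝ) else -1) * Ψ k i (a i)) '' A) with hT
  have hstep : ∀ k, k < m → T k ≤ T (k + 1) := by
    intro k hk
    refine hybrid_step A hA hne ρ hρ (Ψ k) (Ψ (k+1)) (hΨlip (k+1)) ⟨k, hk⟩ ?_ ?_
    · intro i hi
      funext x
      simp only [hΨ]
      have hik : (i : ℕ) ≠ k := by
        intro h; exact hi (Fin.ext h)
      by_cases h : (i : ℕ) < k
      · rw [if_pos h, if_pos (Nat.lt_succ_of_lt h)]
      · have h' : ¬ (i : ℕ) < k + 1 := by omega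
        rw [if_neg h, if_neg h']
    · intro x y
      simp only [hΨ, Fin.val_mk, lt_irrefl, Nat.lt_succ_self, if_true, if_false]
      rw [← mul_sub, abs_mul, abs_of_nonneg hρ]
      exact hφ _ x y
  have hmono : ∀ k, k ≤ m → T 0 ≤ T k := by
    intro k
    induction k with
    | zero => intro _; exact le_refl _
    | succ n ih =>
        intro h
        exact (ih (Nat.le_of_succ_le h)).trans (hstep n (Nat.lt_of_succ_le h))
  have hTm := hmono m (le_refl m)
  -- identify T 0 with the LHS sum
  have hL : radComplexity m ((fun a i => φ i (a i)) '' A) =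
      ((m : ℝ))⁻¹ * ((2 : ℝ) ^ m)⁻¹ * T 0 := by
    unfold radComplexity
    congr 1
    refine Finset.sum_congr rfl ?_
    intro σ _
    rw [Set.image_image]
    have e : (fun a : Fin m → ℝ =>
        ∑ i, (if σ i then (1:ℝ) else -1) * Ψ 0 i (a i)) =
        fun a : Fin m → ℝ => ∑ i, (if σ i then (1:ℝ) else -1) * φ i (a i) := by
      funext a
      simp only [hΨ, Nat.not_lt_zero, if_false]
    rw [e]
  -- identify T m with ρ * (the RHS sum)
  have hR : T m = ρ * ∑ σ : Fin m → Bool,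
      sSup ((fun a : Fin m → ℝ => ∑ i, (if σ i then (1:ℝ) else -1) * a i) '' A) := by
    rw [hT, Finset.mul_sum]
    refine Finset.sum_congr rfl ?_
    intro σ _
    have e : (fun a : Fin m → ℝ => ∑ i, (if σ i then (1:ℝ) else -1) * Ψ m i (a i)) =
        (fun x : ℝ => ρ * x) ∘
          (fun a : Fin m → ℝ => ∑ i, (if σ i then (1:ℝ) else -1) * a i) := by
      funext a
      simp only [Function.comp, hΨ, Fin.is_lt, if_true, Finset.mul_sum]
      refine Finset.sum_congr rfl ?_
      intro i _
      ring
    rw [e, Set.image_comp]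
    have : (fun x : ℝ => ρ * x) ''
        ((fun a : Fin m → ℝ => ∑ i, (if σ i then (1:ℝ) else -1) * a i) '' A) =
        ρ • ((fun a : Fin m → ℝ => ∑ i, (if σ i then (1:ℝ) else -1) * a i) '' A) := by
      rw [← Set.image_smul]
      rfl
    rw [this, Real.sSup_smul_of_nonneg hρ, smul_eq_mul]
  have hc : (0:ℝ) ≤ ((m : ℝ))⁻¹ * ((2 : ℝ) ^ m)⁻¹ := by positivity
  calc radComplexity m ((fun a i => φ i (a i)) '' A)
      = ((m : ℝ))⁻¹ * ((2 : ℝ) ^ m)⁻¹ * T 0 := hL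
    _ ≤ ((m : ℝ))⁻¹ * ((2 : ℝ) ^ m)⁻¹ * T m := by
        exact mul_le_mul_of_nonneg_left hTm hc
    _ = ρ * radComplexity m A := by
        rw [hR]; unfold radComplexity; ring
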